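/- Let N ≥ 4 be an integer, set ν = (N−3)/2, and define Λ(ρ) = (N−2) − ρ·K_{ν+1}(ρ)/K_ν(ρ) for ρ > 0. Then there exists a unique ρ_* > 0 with Λ(ρ_*) = 0. Moreover, every zero ρ of Λ in (0,∞) satisfies ρ < √(N−2) and Λ'(ρ) = ρ − (N−2)/ρ < 0; in particular Λ'(ρ_*) < 0, and the corresponding period T_* = 2π/ρ_* satisfies T_* > 2π/√(N−2). -/

import Mathlib

open Real Filter Topology

/-- The modified Bessel function of the second kind of order `ν`,
`K_ν(x) = ∫_0^∞ exp(−x cosh t) cosh(ν t) dt`. -/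
noncomputable def besselK (ν x : ℝ) : ℝ :=
  ∫ t in Set.Ioi (0 : ℝ), Real.exp (-x * Real.cosh t) * Real.cosh (ν * t)

/-- With `ν = (N−3)/2`, the function `Λ(ρ) = (N−2) − ρ K_{ν+1}(ρ)/K_ν(ρ)`. -/
noncomputable def LambdaFn (N : ℕ) (ρ : ℝ) : ℝ :=
  ((N : ℝ) - 2) -
    ρ * besselK (((N : ℝ) - 3) / 2 + 1) ρ / besselK (((N : ℝ) - 3) / 2) ρ

open MeasureTheory Set
open scoped ENNReal

lemma cosh_quad_lb (t : ℝ) : 1 + t^2/2 ≤ Real.cosh t := by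
  wlog ht : 0 ≤ t with H
  · have := H (-t) (by linarith)
    rw [Real.cosh_neg] at this; nlinarith [this]
  have h1 : Real.cosh t = 2 * Real.sinh (t/2)^2 + 1 := by
    have h0 := Real.cosh_two_mul (t/2)
    have h2 := Real.cosh_sq (t/2)
    rw [show 2*(t/2) = t by ring] at h0
    rw [h0, h2]; ring
  have h3 : t/2 ≤ Real.sinh (t/2) := Real.self_le_sinh_iff.2 (by linarith)
  have h4 : 0 ≤ t/2 := by linarith
  nlinarith

lemma cosh_le_exp_abs (t : ℝ) : Real.cosh t ≤ Real.exp |t| := by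
  rw [Real.cosh_eq]
  rcases abs_cases t with ⟨h, _⟩ | ⟨h, _⟩
  · rw [h]; have := Real.exp_le_exp.2 (neg_le_self_iff.mpr (le_of_eq rfl))
    have h2 : Real.exp (-t) ≤ Real.exp t := Real.exp_le_exp.2 (by cases abs_cases t <;> linarith)
    linarith
  · rw [h]
    have h2 : Real.exp t ≤ Real.exp (-t) := Real.exp_le_exp.2 (by linarith)
    linarith

/-- master integrability lemma -/
lemma integrable_exp_lin_sub_cosh {x : ℝ} (hx : 0 < x) (b : ℝ) :
    IntegrableOn (fun t => Real.exp (b*t - x * Real.cosh t)) (Ioi (0:ℝ)) := by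
  have key : ∀ t ∈ Ioi (0:ℝ), ‖Real.exp (b*t - x * Real.cosh t)‖ ≤
      Real.exp ((b+1)^2/(2*x) + x) * Real.exp (-t) := by
    intro t ht
    rw [Real.norm_eq_abs, abs_of_pos (Real.exp_pos _), ← Real.exp_add]
    apply Real.exp_le_exp.2
    have h1 := cosh_quad_lb t
    have h2 : 0 ≤ (x*t - (b+1))^2 := sq_nonneg _
    have : b*t - x*(1 + t^2/2) ≤ (b+1)^2/(2*x) + x - t := by
      rw [show (b+1)^2/(2*x) + x - t = ((b+1)^2 + 2*x*x - 2*x*t)/(2*x) by field_simp,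
        le_div_iff₀ (by positivity)]
      nlinarith
    nlinarith [mul_le_mul_of_nonneg_left h1 hx.le]
  apply Integrable.mono' (g := fun t => Real.exp ((b+1)^2/(2*x) + x) * Real.exp (-t))
  · have := (exp_neg_integrableOn_Ioi 0 one_pos).const_mul (Real.exp ((b+1)^2/(2*x) + x))
    simpa [neg_one_mul] using this
  · exact (Continuous.aestronglyMeasurable (by continuity)).restrict
  · exact (ae_restrict_iff' measurableSet_Ioi).2 (Filter.Eventually.of_forall key)

lemma abs_cosh_le_exp_abs (a : ℝ) : |Real.cosh a| ≤ Real.exp |a| := by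
  rw [abs_of_pos (Real.cosh_pos a)]; exact cosh_le_exp_abs a

lemma abs_sinh_le_exp_abs (a : ℝ) : |Real.sinh a| ≤ Real.exp |a| := by
  rw [Real.abs_sinh]
  calc Real.sinh |a| ≤ Real.cosh |a| := by
        nlinarith [Real.exp_pos (-|a|), Real.sinh_eq |a|, Real.cosh_eq |a|]
    _ ≤ Real.exp |a| := by
        have := cosh_le_exp_abs |a|; rwa [abs_abs] at this

lemma integrableOn_exp_cosh_mul {x b : ℝ} (hx : 0 < x) {g : ℝ → ℝ} (hg : Continuous g)
    (hb : ∀ t, 0 < t → |g t| ≤ Real.exp (b*t)) :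
    IntegrableOn (fun t => Real.exp (-x * Real.cosh t) * g t) (Ioi (0:ℝ)) := by
  apply Integrable.mono' (integrable_exp_lin_sub_cosh hx b)
  · exact (Continuous.aestronglyMeasurable (by continuity)).restrict
  · refine (ae_restrict_iff' measurableSet_Ioi).2 (Filter.Eventually.of_forall fun t ht => ?_)
    rw [Real.norm_eq_abs, abs_mul, abs_of_pos (Real.exp_pos _)]
    calc Real.exp (-x * Real.cosh t) * |g t| ≤ Real.exp (-x * Real.cosh t) * Real.exp (b*t) := by
          gcongr; exact hb t ht
      _ = Real.exp (b*t - x * Real.cosh t) := by rw [← Real.exp_add]; ring_nf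

lemma integrableOn_besselK_integrand {x : ℝ} (ν : ℝ) (hx : 0 < x) :
    IntegrableOn (fun t => Real.exp (-x * Real.cosh t) * Real.cosh (ν*t)) (Ioi (0:ℝ)) := by
  refine integrableOn_exp_cosh_mul (b := |ν|) hx (by continuity) (fun t ht => ?_)
  calc |Real.cosh (ν*t)| ≤ Real.exp |ν*t| := abs_cosh_le_exp_abs _
    _ ≤ Real.exp (|ν| * t) := by rw [abs_mul, abs_of_pos ht]

lemma besselK_pos {ν x : ℝ} (hx : 0 < x) : 0 < besselK ν x := by
  rw [besselK, setIntegral_pos_iff_support_of_nonneg_ae]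
  · have : Function.support (fun t => Real.exp (-x * Real.cosh t) * Real.cosh (ν*t)) = univ := by
      ext t; simp only [Function.mem_support, mem_univ, iff_true]
      positivity
    rw [this, univ_inter, Real.volume_Ioi]
    exact ENNReal.zero_lt_top
  · refine (ae_restrict_iff' measurableSet_Ioi).2 (Filter.Eventually.of_forall fun t _ => ?_)
    positivity
  · exact integrableOn_besselK_integrand ν hx

lemma integrableOn_exp_cosh_sinh_sinh {x : ℝ} (ν : ℝ) (hx : 0 < x) :
    IntegrableOn (fun t => Real.exp (-x * Real.cosh t) * (Real.sinh t * Real.sinh (ν*t)))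
      (Ioi (0:ℝ)) := by
  refine integrableOn_exp_cosh_mul (b := 1 + |ν|) hx (by continuity) (fun t ht => ?_)
  rw [abs_mul, add_mul, Real.exp_add, one_mul]
  gcongr
  · calc |Real.sinh t| ≤ Real.exp |t| := abs_sinh_le_exp_abs t
      _ = Real.exp t := by rw [abs_of_pos ht]
  · calc |Real.sinh (ν*t)| ≤ Real.exp |ν*t| := abs_sinh_le_exp_abs _
      _ = Real.exp (|ν| * t) := by rw [abs_mul, abs_of_pos ht]

lemma integrableOn_exp_cosh_cosh_cosh {x : ℝ} (ν : ℝ) (hx : 0 < x) :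
    IntegrableOn (fun t => Real.exp (-x * Real.cosh t) * (Real.cosh t * Real.cosh (ν*t)))
      (Ioi (0:ℝ)) := by
  refine integrableOn_exp_cosh_mul (b := 1 + |ν|) hx (by continuity) (fun t ht => ?_)
  rw [abs_mul, add_mul, Real.exp_add, one_mul]
  gcongr
  · calc |Real.cosh t| ≤ Real.exp |t| := abs_cosh_le_exp_abs t
      _ = Real.exp t := by rw [abs_of_pos ht]
  · calc |Real.cosh (ν*t)| ≤ Real.exp |ν*t| := abs_cosh_le_exp_abs _
      _ = Real.exp (|ν| * t) := by rw [abs_mul, abs_of_pos ht]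

lemma cosh_add_cosh_sub (a b : ℝ) :
    Real.cosh (a+b) + Real.cosh (a-b) = 2 * Real.cosh a * Real.cosh b := by
  rw [Real.cosh_add, Real.cosh_sub]; ring

lemma cosh_sub_cosh_sub' (a b : ℝ) :
    Real.cosh (a+b) - Real.cosh (a-b) = 2 * Real.sinh a * Real.sinh b := by
  rw [Real.cosh_add, Real.cosh_sub]; ring

/-- Recurrence `x K_{ν+1} = x K_{ν-1} + 2ν K_ν`. -/
lemma besselK_recurrence {x : ℝ} (ν : ℝ) (hx : 0 < x) :
    x * besselK (ν+1) x = x * besselK (ν-1) x + 2*ν*besselK ν x := by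
  set G : ℝ → ℝ := fun t => (-2/x) * (Real.exp (-x*Real.cosh t) * Real.sinh (ν*t)) with hG
  set G' : ℝ → ℝ := fun t =>
      2 * (Real.exp (-x * Real.cosh t) * (Real.sinh t * Real.sinh (ν*t)))
      - (2*ν/x) * (Real.exp (-x * Real.cosh t) * Real.cosh (ν*t)) with hG'
  have hderiv : ∀ t : ℝ, HasDerivAt G (G' t) t := by
    intro t
    have h1 : HasDerivAt (fun t : ℝ => Real.exp (-x*Real.cosh t))
        (Real.exp (-x*Real.cosh t) * (-x * Real.sinh t)) t :=
      (((Real.hasDerivAt_cosh t).const_mul (-x)).exp)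
    have h2 : HasDerivAt (fun t : ℝ => Real.sinh (ν*t)) (Real.cosh (ν*t) * ν) t :=
      HasDerivAt.sinh ((hasDerivAt_id t).const_mul ν) |>.congr_deriv (by simp)
    have := ((h1.mul h2).const_mul (-2/x))
    refine this.congr_deriv ?_
    rw [hG']
    field_simp
    ring
  have hint : IntegrableOn G' (Ioi (0:ℝ)) :=
    ((integrableOn_exp_cosh_sinh_sinh ν hx).const_mul 2).sub
      ((integrableOn_besselK_integrand ν hx).const_mul (2*ν/x))
  have htend : Tendsto G atTop (𝓝 0) := by
    have hb : ∀ t : ℝ, 0 ≤ t → |G t| ≤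
        (2/x) * Real.exp ((|ν|+1)^2/(2*x) + x) * Real.exp (-t) := by
      intro t ht
      rw [hG]
      have key : |ν| * t - x * Real.cosh t ≤ (|ν|+1)^2/(2*x) + x - t := by
        have h1 := cosh_quad_lb t
        rw [show (|ν|+1)^2/(2*x) + x - t = ((|ν|+1)^2 + 2*x*x - 2*x*t)/(2*x) by
          field_simp, le_div_iff₀ (by positivity)]
        nlinarith [sq_nonneg (x*t - (|ν|+1)), mul_le_mul_of_nonneg_left h1 hx.le]
      have h3 : |Real.exp (-x*Real.cosh t) * Real.sinh (ν*t)|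
          ≤ Real.exp (|ν| * t - x*Real.cosh t) := by
        rw [abs_mul, abs_of_pos (Real.exp_pos _)]
        calc Real.exp (-x*Real.cosh t) * |Real.sinh (ν*t)|
            ≤ Real.exp (-x*Real.cosh t) * Real.exp (|ν| * t) := by
              gcongr
              calc |Real.sinh (ν*t)| ≤ Real.exp |ν*t| := abs_sinh_le_exp_abs _
                _ = Real.exp (|ν| * t) := by rw [abs_mul, abs_of_nonneg ht]
          _ = Real.exp (|ν| * t - x*Real.cosh t) := by rw [← Real.exp_add]; ring_nf
      rw [abs_mul, abs_div, abs_of_pos hx]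
      have : |(-2:ℝ)| = 2 := by norm_num
      rw [this]
      calc 2/x * |Real.exp (-x*Real.cosh t) * Real.sinh (ν*t)|
          ≤ 2/x * Real.exp (|ν| * t - x*Real.cosh t) := by gcongr
        _ ≤ 2/x * Real.exp ((|ν|+1)^2/(2*x) + x - t) :=
            mul_le_mul_of_nonneg_left (Real.exp_le_exp.2 key) (by positivity)
        _ = 2/x * Real.exp ((|ν|+1)^2/(2*x) + x) * Real.exp (-t) := by
            rw [mul_assoc, ← Real.exp_add]; ring_nf
    have hlim : Tendsto (fun t => (2/x) * Real.exp ((|ν|+1)^2/(2*x) + x) * Real.exp (-t))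
        atTop (𝓝 0) := by
      simpa using (Real.tendsto_exp_neg_atTop_nhds_zero.const_mul
        ((2/x) * Real.exp ((|ν|+1)^2/(2*x) + x)))
    have hlim' : Tendsto (fun t => -((2/x) * Real.exp ((|ν|+1)^2/(2*x) + x) * Real.exp (-t)))
        atTop (𝓝 0) := by simpa using hlim.neg
    refine tendsto_of_tendsto_of_tendsto_of_le_of_le' hlim' hlim ?_ ?_
    · filter_upwards [eventually_ge_atTop (0:ℝ)] with t ht
      linarith [(abs_le.1 (hb t ht)).1]
    · filter_upwards [eventually_ge_atTop (0:ℝ)] with t ht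
      linarith [(abs_le.1 (hb t ht)).2]
  have hFTC := integral_Ioi_of_hasDerivAt_of_tendsto' (f := G) (f' := G') (a := 0)
    (fun t _ => hderiv t) hint htend
  have hG0 : G 0 = 0 := by simp [hG]
  rw [hG0, sub_zero] at hFTC
  -- Now expand the integral of G'
  have hsplit : ∫ t in Ioi (0:ℝ), G' t =
      2 * (∫ t in Ioi (0:ℝ), Real.exp (-x * Real.cosh t) * (Real.sinh t * Real.sinh (ν*t)))
      - (2*ν/x) * besselK ν x := by
    rw [hG', besselK]
    rw [integral_sub ((integrableOn_exp_cosh_sinh_sinh ν hx).const_mul 2)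
      ((integrableOn_besselK_integrand ν hx).const_mul (2*ν/x)),
      integral_const_mul, integral_const_mul]
  have hid : ∀ t : ℝ, Real.exp (-x * Real.cosh t) * (Real.sinh t * Real.sinh (ν*t))
      = (Real.exp (-x * Real.cosh t) * Real.cosh ((ν+1)*t)
        - Real.exp (-x * Real.cosh t) * Real.cosh ((ν-1)*t)) / 2 := by
    intro t
    have := cosh_sub_cosh_sub' (ν*t) t
    rw [show (ν+1)*t = ν*t + t by ring, show (ν-1)*t = ν*t - t by ring]
    linear_combination -(Real.exp (-x*Real.cosh t)) / 2 * this
  have hsinh : ∫ t in Ioi (0:ℝ), Real.exp (-x * Real.cosh t) * (Real.sinh t * Real.sinh (ν*t))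
      = (besselK (ν+1) x - besselK (ν-1) x) / 2 := by
    rw [besselK, besselK]
    rw [show (fun t => Real.exp (-x * Real.cosh t) * (Real.sinh t * Real.sinh (ν*t)))
      = fun t => (Real.exp (-x * Real.cosh t) * Real.cosh ((ν+1)*t)
        - Real.exp (-x * Real.cosh t) * Real.cosh ((ν-1)*t)) / 2 from funext hid]
    rw [integral_div, integral_sub (integrableOn_besselK_integrand (ν+1) hx)
      (integrableOn_besselK_integrand (ν-1) hx)]
  rw [hsplit, hsinh] at hFTC
  have hKν := besselK_pos (ν := ν) hx
  field_simp at hFTC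
  linarith

/-- Derivative of `besselK` in `x`. -/
lemma hasDerivAt_besselK {x : ℝ} (ν : ℝ) (hx : 0 < x) :
    HasDerivAt (fun y => besselK ν y)
      (-(besselK (ν-1) x + besselK (ν+1) x)/2) x := by
  have key := hasDerivAt_integral_of_dominated_loc_of_deriv_le
    (μ := volume.restrict (Ioi (0:ℝ))) (x₀ := x) (s := Metric.ball x (x/2))
    (F := fun y t => Real.exp (-y * Real.cosh t) * Real.cosh (ν*t))
    (F' := fun y t => -(Real.exp (-y * Real.cosh t) * (Real.cosh t * Real.cosh (ν*t))))
    (bound := fun t => Real.exp (-(x/2) * Real.cosh t) * (Real.cosh t * Real.cosh (ν*t)))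
    (Metric.ball_mem_nhds x (by positivity))
    (Filter.Eventually.of_forall fun y =>
      (Continuous.aestronglyMeasurable (by continuity)).restrict)
    (integrableOn_besselK_integrand ν hx)
    ((Continuous.aestronglyMeasurable (by continuity)).restrict)
    (Filter.Eventually.of_forall fun t => fun y hy => ?_)
    (integrableOn_exp_cosh_cosh_cosh ν (by positivity))
    (Filter.Eventually.of_forall fun t => fun y hy => ?_)
  · have h2 : HasDerivAt (fun y : ℝ => besselK ν y)
        (∫ t in Ioi (0:ℝ), -(Real.exp (-x * Real.cosh t) * (Real.cosh t * Real.cosh (ν*t)))) x := by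
      have := key.2
      simpa [besselK] using this
    have h3 : ∫ t in Ioi (0:ℝ), -(Real.exp (-x * Real.cosh t) * (Real.cosh t * Real.cosh (ν*t)))
        = -(besselK (ν-1) x + besselK (ν+1) x)/2 := by
      have hid : (fun t => -(Real.exp (-x * Real.cosh t) * (Real.cosh t * Real.cosh (ν*t))))
          = fun t => (-(Real.exp (-x * Real.cosh t) * Real.cosh ((ν-1)*t)
              + Real.exp (-x * Real.cosh t) * Real.cosh ((ν+1)*t)))/2 := by
        funext t
        have := cosh_add_cosh_sub (ν*t) t
        rw [show (ν+1)*t = ν*t + t by ring, show (ν-1)*t = ν*t - t by ring]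
        linear_combination (Real.exp (-x*Real.cosh t)) / 2 * this
      rw [hid, integral_div, integral_neg,
        integral_add (integrableOn_besselK_integrand (ν-1) hx)
          (integrableOn_besselK_integrand (ν+1) hx), besselK, besselK]
    rwa [h3] at h2
  · -- bound
    have hy2 : x/2 < y := by
      have h := mem_ball_iff_norm.1 hy
      rw [Real.norm_eq_abs] at h
      linarith [(abs_lt.1 h).1]
    rw [Real.norm_eq_abs, abs_neg, abs_mul, abs_of_pos (Real.exp_pos _),
      abs_of_pos (by positivity : (0:ℝ) < Real.cosh t * Real.cosh (ν*t))]
    refine mul_le_mul_of_nonneg_right (Real.exp_le_exp.2 ?_) (by positivity)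
    have h1 : (1:ℝ) ≤ Real.cosh t := Real.one_le_cosh t
    nlinarith
  · -- differentiability in y
    have h1 : HasDerivAt (fun y : ℝ => Real.exp (-y * Real.cosh t))
        (Real.exp (-y * Real.cosh t) * (-1 * Real.cosh t)) y :=
      ((hasDerivAt_id y).neg.mul_const (Real.cosh t)).exp
    have := h1.mul_const (Real.cosh (ν*t))
    exact this.congr_deriv (by ring)

lemma integrableOn_exp_cosh_sinh {x : ℝ} (hx : 0 < x) :
    IntegrableOn (fun t => Real.exp (-x * Real.cosh t) * Real.sinh t) (Ioi (0:ℝ)) := by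
  refine integrableOn_exp_cosh_mul (b := 1) hx (by continuity) (fun t ht => ?_)
  calc |Real.sinh t| ≤ Real.exp |t| := abs_sinh_le_exp_abs t
    _ = Real.exp (1*t) := by rw [abs_of_pos ht, one_mul]

lemma sinh_integral_pos {x : ℝ} (hx : 0 < x) :
    0 < ∫ t in Ioi (0:ℝ), Real.exp (-x * Real.cosh t) * Real.sinh t := by
  rw [setIntegral_pos_iff_support_of_nonneg_ae]
  · have hsub : Ioi (0:ℝ) ⊆ Function.support (fun t => Real.exp (-x * Real.cosh t) * Real.sinh t)
        ∩ Ioi 0 := by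
      intro t ht
      refine ⟨?_, ht⟩
      have hs : 0 < Real.sinh t := Real.sinh_pos_iff.2 ht
      simp only [Function.mem_support]
      positivity
    calc (0:ℝ≥0∞) < volume (Ioi (0:ℝ)) := by rw [Real.volume_Ioi]; exact ENNReal.zero_lt_top
      _ ≤ _ := measure_mono hsub
  · refine (ae_restrict_iff' measurableSet_Ioi).2 (Filter.Eventually.of_forall fun t ht => ?_)
    have hs : 0 ≤ Real.sinh t := (Real.sinh_pos_iff.2 ht).le
    positivity
  · exact integrableOn_exp_cosh_sinh hx

lemma trig_nonneg (ν t u : ℝ) :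
    0 ≤ Real.cosh ((ν-1)*t) * Real.cosh ((ν+1)*u) + Real.cosh ((ν+1)*t) * Real.cosh ((ν-1)*u)
      - 2 * Real.cosh (ν*t) * Real.cosh (ν*u) - 2 * Real.sinh t * Real.sinh u := by
  have h1 : Real.cosh (ν*(t+u)) = Real.cosh (ν*t) * Real.cosh (ν*u)
      + Real.sinh (ν*t) * Real.sinh (ν*u) := by rw [mul_add, Real.cosh_add]
  have h2 : Real.cosh (ν*(t-u)) = Real.cosh (ν*t) * Real.cosh (ν*u)
      - Real.sinh (ν*t) * Real.sinh (ν*u) := by rw [mul_sub, Real.cosh_sub]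
  have h3 : Real.cosh (t+u) = Real.cosh t * Real.cosh u + Real.sinh t * Real.sinh u :=
    Real.cosh_add t u
  have h4 : Real.cosh (t-u) = Real.cosh t * Real.cosh u - Real.sinh t * Real.sinh u :=
    Real.cosh_sub t u
  have e1 : Real.cosh ((ν-1)*t) = Real.cosh (ν*t) * Real.cosh t
      - Real.sinh (ν*t) * Real.sinh t := by
    rw [show (ν-1)*t = ν*t - t by ring, Real.cosh_sub]
  have e2 : Real.cosh ((ν+1)*t) = Real.cosh (ν*t) * Real.cosh t
      + Real.sinh (ν*t) * Real.sinh t := by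
    rw [show (ν+1)*t = ν*t + t by ring, Real.cosh_add]
  have e3 : Real.cosh ((ν-1)*u) = Real.cosh (ν*u) * Real.cosh u
      - Real.sinh (ν*u) * Real.sinh u := by
    rw [show (ν-1)*u = ν*u - u by ring, Real.cosh_sub]
  have e4 : Real.cosh ((ν+1)*u) = Real.cosh (ν*u) * Real.cosh u
      + Real.sinh (ν*u) * Real.sinh u := by
    rw [show (ν+1)*u = ν*u + u by ring, Real.cosh_add]
  have key : Real.cosh ((ν-1)*t) * Real.cosh ((ν+1)*u) + Real.cosh ((ν+1)*t) * Real.cosh ((ν-1)*u)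
      - 2 * Real.cosh (ν*t) * Real.cosh (ν*u) - 2 * Real.sinh t * Real.sinh u
      = Real.cosh (ν*(t+u)) * (Real.cosh (t-u) - 1)
        + (Real.cosh (ν*(t-u)) - 1) * (Real.cosh (t+u) - 1) + (Real.cosh (t-u) - 1) := by
    rw [e1, e2, e3, e4, h1, h2, h3, h4]; ring
  rw [key]
  have p1 : 0 ≤ Real.cosh (ν*(t+u)) * (Real.cosh (t-u) - 1) :=
    mul_nonneg (Real.cosh_pos _).le (by linarith [Real.one_le_cosh (t-u)])
  have p2 : 0 ≤ (Real.cosh (ν*(t-u)) - 1) * (Real.cosh (t+u) - 1) :=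
    mul_nonneg (by linarith [Real.one_le_cosh (ν*(t-u))]) (by linarith [Real.one_le_cosh (t+u)])
  linarith [Real.one_le_cosh (t-u)]

/-- Strict Turán-type inequality for `besselK`. -/
lemma besselK_turan {x : ℝ} (ν : ℝ) (hx : 0 < x) :
    besselK ν x ^ 2 < besselK (ν-1) x * besselK (ν+1) x := by
  set μ := volume.restrict (Ioi (0:ℝ)) with hμ
  set S := ∫ t in Ioi (0:ℝ), Real.exp (-x * Real.cosh t) * Real.sinh t with hS
  have hSpos : 0 < S := sinh_integral_pos hx
  have hKc : ∀ a : ℝ, Integrable (fun t => Real.exp (-x * Real.cosh t) * Real.cosh (a*t)) μ :=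
    fun a => integrableOn_besselK_integrand a hx
  have hKs : Integrable (fun t => Real.exp (-x * Real.cosh t) * Real.sinh t) μ :=
    integrableOn_exp_cosh_sinh hx
  -- product integrability
  have P : ∀ a b : ℝ, Integrable (fun z : ℝ × ℝ =>
      (Real.exp (-x * Real.cosh z.1) * Real.cosh (a*z.1))
      * (Real.exp (-x * Real.cosh z.2) * Real.cosh (b*z.2))) (μ.prod μ) :=
    fun a b => (hKc a).mul_prod (hKc b)
  have PS : Integrable (fun z : ℝ × ℝ =>
      (Real.exp (-x * Real.cosh z.1) * Real.sinh z.1)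
      * (Real.exp (-x * Real.cosh z.2) * Real.sinh z.2)) (μ.prod μ) :=
    hKs.mul_prod hKs
  have key : 0 ≤ 2 * (besselK (ν-1) x * besselK (ν+1) x) - 2 * besselK ν x ^ 2 - 2 * S^2 := by
    have hint : 0 ≤ ∫ z : ℝ × ℝ, ((Real.exp (-x * Real.cosh z.1) * Real.cosh ((ν-1)*z.1))
          * (Real.exp (-x * Real.cosh z.2) * Real.cosh ((ν+1)*z.2))
        + (Real.exp (-x * Real.cosh z.1) * Real.cosh ((ν+1)*z.1))
          * (Real.exp (-x * Real.cosh z.2) * Real.cosh ((ν-1)*z.2))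
        - 2 * ((Real.exp (-x * Real.cosh z.1) * Real.cosh (ν*z.1))
          * (Real.exp (-x * Real.cosh z.2) * Real.cosh (ν*z.2)))
        - 2 * ((Real.exp (-x * Real.cosh z.1) * Real.sinh z.1)
          * (Real.exp (-x * Real.cosh z.2) * Real.sinh z.2))) ∂(μ.prod μ) := by
      refine integral_nonneg fun z => ?_
      show (0:ℝ) ≤ _
      have h0 := trig_nonneg ν z.1 z.2
      have he1 := Real.exp_pos (-x * Real.cosh z.1)
      have he2 := Real.exp_pos (-x * Real.cosh z.2)
      nlinarith [mul_nonneg (mul_pos he1 he2).le h0]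
    have c12 : Integrable (fun z : ℝ × ℝ =>
        (Real.exp (-x * Real.cosh z.1) * Real.cosh ((ν-1)*z.1))
          * (Real.exp (-x * Real.cosh z.2) * Real.cosh ((ν+1)*z.2))
        + (Real.exp (-x * Real.cosh z.1) * Real.cosh ((ν+1)*z.1))
          * (Real.exp (-x * Real.cosh z.2) * Real.cosh ((ν-1)*z.2))) (μ.prod μ) :=
      (P (ν-1) (ν+1)).add (P (ν+1) (ν-1))
    have c3 : Integrable (fun z : ℝ × ℝ =>
        2 * ((Real.exp (-x * Real.cosh z.1) * Real.cosh (ν*z.1))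
          * (Real.exp (-x * Real.cosh z.2) * Real.cosh (ν*z.2)))) (μ.prod μ) :=
      (P ν ν).const_mul 2
    have c123 : Integrable (fun z : ℝ × ℝ =>
        (Real.exp (-x * Real.cosh z.1) * Real.cosh ((ν-1)*z.1))
          * (Real.exp (-x * Real.cosh z.2) * Real.cosh ((ν+1)*z.2))
        + (Real.exp (-x * Real.cosh z.1) * Real.cosh ((ν+1)*z.1))
          * (Real.exp (-x * Real.cosh z.2) * Real.cosh ((ν-1)*z.2))
        - 2 * ((Real.exp (-x * Real.cosh z.1) * Real.cosh (ν*z.1))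
          * (Real.exp (-x * Real.cosh z.2) * Real.cosh (ν*z.2)))) (μ.prod μ) :=
      c12.sub c3
    have c4 : Integrable (fun z : ℝ × ℝ =>
        2 * ((Real.exp (-x * Real.cosh z.1) * Real.sinh z.1)
          * (Real.exp (-x * Real.cosh z.2) * Real.sinh z.2))) (μ.prod μ) :=
      PS.const_mul 2
    rw [integral_sub c123 c4, integral_sub c12 c3,
      integral_add (P (ν-1) (ν+1)) (P (ν+1) (ν-1)),
      integral_const_mul, integral_const_mul] at hint
    have m1 : ∫ z : ℝ × ℝ, (Real.exp (-x * Real.cosh z.1) * Real.cosh ((ν-1)*z.1))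
        * (Real.exp (-x * Real.cosh z.2) * Real.cosh ((ν+1)*z.2)) ∂(μ.prod μ)
        = besselK (ν-1) x * besselK (ν+1) x :=
      integral_prod_mul (f := fun t => Real.exp (-x * Real.cosh t) * Real.cosh ((ν-1)*t))
        (g := fun t => Real.exp (-x * Real.cosh t) * Real.cosh ((ν+1)*t))
    have m2 : ∫ z : ℝ × ℝ, (Real.exp (-x * Real.cosh z.1) * Real.cosh ((ν+1)*z.1))
        * (Real.exp (-x * Real.cosh z.2) * Real.cosh ((ν-1)*z.2)) ∂(μ.prod μ)
        = besselK (ν+1) x * besselK (ν-1) x :=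
      integral_prod_mul (f := fun t => Real.exp (-x * Real.cosh t) * Real.cosh ((ν+1)*t))
        (g := fun t => Real.exp (-x * Real.cosh t) * Real.cosh ((ν-1)*t))
    have m3 : ∫ z : ℝ × ℝ, (Real.exp (-x * Real.cosh z.1) * Real.cosh (ν*z.1))
        * (Real.exp (-x * Real.cosh z.2) * Real.cosh (ν*z.2)) ∂(μ.prod μ)
        = besselK ν x * besselK ν x :=
      integral_prod_mul (f := fun t => Real.exp (-x * Real.cosh t) * Real.cosh (ν*t))
        (g := fun t => Real.exp (-x * Real.cosh t) * Real.cosh (ν*t))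
    have m4 : ∫ z : ℝ × ℝ, (Real.exp (-x * Real.cosh z.1) * Real.sinh z.1)
        * (Real.exp (-x * Real.cosh z.2) * Real.sinh z.2) ∂(μ.prod μ)
        = S * S :=
      integral_prod_mul (f := fun t => Real.exp (-x * Real.cosh t) * Real.sinh t)
        (g := fun t => Real.exp (-x * Real.cosh t) * Real.sinh t)
    rw [m1, m2, m3, m4] at hint
    nlinarith [hint]
  nlinarith [hSpos, key]

lemma besselK_le_besselK {a b x : ℝ} (h : |a| ≤ |b|) (hx : 0 < x) :
    besselK a x ≤ besselK b x := by
  rw [besselK, besselK]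
  refine setIntegral_mono_on (integrableOn_besselK_integrand a hx)
    (integrableOn_besselK_integrand b hx) measurableSet_Ioi (fun t ht => ?_)
  have : Real.cosh (a*t) ≤ Real.cosh (b*t) := by
    rw [Real.cosh_le_cosh, abs_mul, abs_mul]
    exact mul_le_mul_of_nonneg_right h (abs_nonneg t)
  exact mul_le_mul_of_nonneg_left this (Real.exp_pos _).le

section Main

variable (N : ℕ)

lemma lambda_pos_small (hN : 4 ≤ N) {ρ : ℝ} (h0 : 0 < ρ) (h1 : ρ < 1) :
    0 < LambdaFn N ρ := by
  have hN4 : (4:ℝ) ≤ (N:ℝ) := by exact_mod_cast hN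
  set ν : ℝ := ((N:ℝ)-3)/2 with hν
  have hK0 : 0 < besselK ν ρ := besselK_pos h0
  have hKm : 0 < besselK (ν-1) ρ := besselK_pos h0
  have hrec := besselK_recurrence (x := ρ) ν h0
  have habs : |ν - 1| ≤ |ν| := by
    have hν2 : (1:ℝ)/2 ≤ ν := by rw [hν]; linarith
    rw [abs_of_nonneg (by linarith : (0:ℝ) ≤ ν)]
    exact abs_le.2 ⟨by linarith, by linarith⟩
  have hmono : besselK (ν-1) ρ ≤ besselK ν ρ := besselK_le_besselK habs h0
  have hlt : ρ * besselK (ν+1) ρ < ((N:ℝ)-2) * besselK ν ρ := by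
    have h2 : ρ * besselK (ν-1) ρ ≤ ρ * besselK ν ρ :=
      mul_le_mul_of_nonneg_left hmono h0.le
    have hm : ((N:ℝ)-2) = 2*ν + 1 := by rw [hν]; ring
    nlinarith
  rw [LambdaFn, ← hν, sub_pos, div_lt_iff₀ hK0]
  linarith

lemma lambda_neg_large (hN : 4 ≤ N) {ρ : ℝ} (h : (N:ℝ)-2 ≤ ρ) :
    LambdaFn N ρ < 0 := by
  have hN4 : (4:ℝ) ≤ (N:ℝ) := by exact_mod_cast hN
  have h0 : 0 < ρ := by linarith
  set ν : ℝ := ((N:ℝ)-3)/2 with hν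
  have hK0 : 0 < besselK ν ρ := besselK_pos h0
  have hK1 : 0 < besselK (ν+1) ρ := besselK_pos h0
  have hrec := besselK_recurrence (x := ρ) ν h0
  have hturan := besselK_turan (x := ρ) ν h0
  have hν2 : (1:ℝ)/2 ≤ ν := by rw [hν]; linarith
  have hm : ((N:ℝ)-2) = 2*ν + 1 := by rw [hν]; ring
  by_contra hc
  push_neg at hc
  rw [LambdaFn, ← hν, sub_nonneg, div_le_iff₀ hK0, hm] at hc
  have hscaled : ρ^2 * (besselK ν ρ * besselK ν ρ)
      < (ρ * besselK (ν-1) ρ) * (ρ * besselK (ν+1) ρ) := by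
    nlinarith [mul_lt_mul_of_pos_left hturan (mul_pos h0 h0)]
  have hKm1 : ρ * besselK (ν-1) ρ = ρ*besselK (ν+1) ρ - 2*ν*besselK ν ρ := by linarith
  have hsub : (ρ * besselK (ν-1) ρ) * (ρ * besselK (ν+1) ρ)
      = (ρ*besselK (ν+1) ρ - 2*ν*besselK ν ρ) * (ρ * besselK (ν+1) ρ) := by rw [hKm1]
  have hP : 0 ≤ ((2*ν+1) * besselK ν ρ - ρ * besselK (ν+1) ρ)
      * (ρ * besselK (ν+1) ρ + besselK ν ρ) :=
    mul_nonneg (by linarith) (by positivity)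
  have hρm : 2*ν+1 ≤ ρ := by linarith
  have hint2 : 0 < (2*ν+1)*(besselK ν ρ*besselK ν ρ) := by positivity
  have hint1 : 0 ≤ (2*ν+1-2)*((2*ν+1)*(besselK ν ρ*besselK ν ρ)) :=
    mul_nonneg (by linarith) hint2.le
  have hsq : (2*ν+1)^2 ≤ ρ^2 := by nlinarith
  nlinarith [hscaled, hsub, hP, hint1, hint2, mul_pos hK0 hK0,
    mul_le_mul_of_nonneg_right hsq (mul_pos hK0 hK0).le]

lemma lambda_zero_sq_lt (hN : 4 ≤ N) {ρ : ℝ} (h0 : 0 < ρ) (hz : LambdaFn N ρ = 0) :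
    ρ^2 < (N:ℝ)-2 := by
  have hN4 : (4:ℝ) ≤ (N:ℝ) := by exact_mod_cast hN
  set ν : ℝ := ((N:ℝ)-3)/2 with hν
  have hK0 : 0 < besselK ν ρ := besselK_pos h0
  have hrec := besselK_recurrence (x := ρ) ν h0
  have hturan := besselK_turan (x := ρ) ν h0
  have hm : ((N:ℝ)-2) = 2*ν + 1 := by rw [hν]; ring
  rw [LambdaFn, ← hν, sub_eq_zero, eq_div_iff (ne_of_gt hK0)] at hz
  -- hz : ((N:ℝ)-2) * besselK ν ρ = ρ * besselK (ν+1) ρ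
  have e1 : ρ * besselK (ν-1) ρ = besselK ν ρ := by nlinarith [hrec, hz]
  have hscaled : ρ^2 * (besselK ν ρ * besselK ν ρ)
      < (ρ * besselK (ν-1) ρ) * (ρ * besselK (ν+1) ρ) := by
    nlinarith [mul_lt_mul_of_pos_left hturan (mul_pos h0 h0)]
  have hsub : (ρ * besselK (ν-1) ρ) * (ρ * besselK (ν+1) ρ)
      = besselK ν ρ * (((N:ℝ)-2) * besselK ν ρ) := by rw [e1, ← hz]
  nlinarith [hscaled, hsub, mul_pos hK0 hK0]

lemma lambda_deriv (hN : 4 ≤ N) {ρ : ℝ} (hρ : 0 < ρ) :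
    ∃ d : ℝ, HasDerivAt (LambdaFn N) d ρ ∧
      (LambdaFn N ρ = 0 → d = ρ - ((N:ℝ)-2)/ρ) := by
  have hN4 : (4:ℝ) ≤ (N:ℝ) := by exact_mod_cast hN
  set ν : ℝ := ((N:ℝ)-3)/2 with hν
  have hK0 : 0 < besselK ν ρ := besselK_pos hρ
  have h1 : HasDerivAt (fun y => besselK (ν+1) y)
      (-(besselK ν ρ + besselK (ν+2) ρ)/2) ρ := by
    have h := hasDerivAt_besselK (ν+1) hρ
    rw [show ν+1-1 = ν by ring, show ν+1+1 = ν+2 by ring] at h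
    exact h
  have h0 : HasDerivAt (fun y => besselK ν y)
      (-(besselK (ν-1) ρ + besselK (ν+1) ρ)/2) ρ := hasDerivAt_besselK ν hρ
  have hnum : HasDerivAt (fun y => y * besselK (ν+1) y)
      (1 * besselK (ν+1) ρ + ρ * (-(besselK ν ρ + besselK (ν+2) ρ)/2)) ρ :=
    (hasDerivAt_id ρ).mul h1
  have hq := hnum.div h0 (ne_of_gt hK0)
  have hLeq : LambdaFn N = fun y => ((N:ℝ)-2) - y * besselK (ν+1) y / besselK ν y := by
    funext y; rw [LambdaFn, hν]
  have hL := hq.const_sub ((N:ℝ)-2)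
  replace hL : HasDerivAt (LambdaFn N) (-(((1 * besselK (ν+1) ρ + ρ * (-(besselK ν ρ + besselK (ν+2) ρ)/2)) * besselK ν ρ -
      ρ * besselK (ν+1) ρ * (-(besselK (ν-1) ρ + besselK (ν+1) ρ)/2)) / besselK ν ρ ^ 2)) ρ := by rw [hLeq]; exact hL
  refine ⟨_, hL, fun hz => ?_⟩
  have hz' : ((N:ℝ)-2) * besselK ν ρ = ρ * besselK (ν+1) ρ := by
    rw [LambdaFn, ← hν, sub_eq_zero, eq_div_iff (ne_of_gt hK0)] at hz
    exact hz
  have hm : ((N:ℝ)-2) = 2*ν + 1 := by rw [hν]; ring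
  have r1 := besselK_recurrence (x := ρ) ν hρ
  have r2 : ρ * besselK (ν+2) ρ = ρ * besselK ν ρ + 2*(ν+1)*besselK (ν+1) ρ := by
    have h := besselK_recurrence (x := ρ) (ν+1) hρ
    rw [show ν+1-1 = ν by ring, show ν+1+1 = ν+2 by ring] at h
    exact h
  have hz2 : ρ * besselK (ν+1) ρ = (2*ν+1) * besselK ν ρ := by rw [hm] at hz'; linarith
  -- solve for the other Bessel values in terms of K₀
  have e₁ : besselK (ν+1) ρ = (2*ν+1) * besselK ν ρ / ρ := by
    rw [eq_div_iff (ne_of_gt hρ)]; linear_combination hz2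
  have em : besselK (ν-1) ρ = besselK ν ρ / ρ := by
    rw [eq_div_iff (ne_of_gt hρ)]; linear_combination hz2 - r1
  have e₂ : besselK (ν+2) ρ = (ρ^2 * besselK ν ρ + 2*(ν+1)*(2*ν+1)*besselK ν ρ) / ρ^2 := by
    rw [eq_div_iff (by positivity : (ρ:ℝ)^2 ≠ 0)]
    linear_combination ρ * r2 + 2*(ν+1) * hz2
  rw [e₁, em, e₂, hm]
  field_simp
  ring

lemma lambda_continuousOn (hN : 4 ≤ N) {s : Set ℝ} (hs : s ⊆ Ioi (0:ℝ)) :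
    ContinuousOn (LambdaFn N) s := fun x hx =>
  ((lambda_deriv N hN (hs hx)).choose_spec.1.continuousAt).continuousWithinAt

lemma lambda_slope_neg (hN : 4 ≤ N) {ρ : ℝ} (hρ : 0 < ρ) (hz : LambdaFn N ρ = 0) :
    ∀ᶠ x in 𝓝[≠] ρ, slope (LambdaFn N) ρ x < 0 := by
  obtain ⟨d, hd, hdz⟩ := lambda_deriv N hN hρ
  have hdneg : d < 0 := by
    rw [hdz hz]
    have hsq := lambda_zero_sq_lt N hN hρ hz
    rw [sub_neg, lt_div_iff₀ hρ]
    nlinarith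
  exact (hasDerivAt_iff_tendsto_slope.1 hd).eventually_lt_const hdneg

lemma lambda_right_neg (hN : 4 ≤ N) {ρ w : ℝ} (hρ : 0 < ρ) (hz : LambdaFn N ρ = 0)
    (hw : ρ < w) : ∃ x, x ∈ Ioo ρ w ∧ LambdaFn N x < 0 := by
  have h1 := (lambda_slope_neg N hN hρ hz).filter_mono
    (nhdsWithin_mono ρ (fun x (hx : x ∈ Ioi ρ) => (ne_of_gt hx : x ≠ ρ)))
  have h2 : ∀ᶠ x in 𝓝[>] ρ, x ∈ Ioo ρ w := Ioo_mem_nhdsGT hw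
  obtain ⟨x, hx1, hx2⟩ := (h1.and h2).exists
  refine ⟨x, hx2, ?_⟩
  have h5 : slope (LambdaFn N) ρ x = LambdaFn N x / (x - ρ) := by
    rw [slope_def_field, hz, sub_zero]
  rw [h5, div_neg_iff] at hx1
  rcases hx1 with ⟨h6, h7⟩ | ⟨h6, h7⟩
  · exfalso; have := hx2.1; linarith
  · exact h6

lemma lambda_left_pos (hN : 4 ≤ N) {ρ w : ℝ} (hρ : 0 < ρ) (hz : LambdaFn N ρ = 0)
    (hw0 : 0 < w) (hw : w < ρ) : ∃ x, x ∈ Ioo w ρ ∧ 0 < LambdaFn N x := by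
  have h1 := (lambda_slope_neg N hN hρ hz).filter_mono
    (nhdsWithin_mono ρ (fun x (hx : x ∈ Iio ρ) => (ne_of_lt hx : x ≠ ρ)))
  have h2 : ∀ᶠ x in 𝓝[<] ρ, x ∈ Ioo w ρ := Ioo_mem_nhdsLT hw
  obtain ⟨x, hx1, hx2⟩ := (h1.and h2).exists
  refine ⟨x, hx2, ?_⟩
  have h5 : slope (LambdaFn N) ρ x = LambdaFn N x / (x - ρ) := by
    rw [slope_def_field, hz, sub_zero]
  rw [h5, div_neg_iff] at hx1
  rcases hx1 with ⟨h6, h7⟩ | ⟨h6, h7⟩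
  · exact h6
  · exfalso; have := hx2.2; linarith

lemma lambda_no_two_zeros (hN : 4 ≤ N) {a b : ℝ} (ha : 0 < a) (hab : a < b)
    (hza : LambdaFn N a = 0) (hzb : LambdaFn N b = 0) : False := by
  have hb : 0 < b := lt_trans ha hab
  -- find w ∈ (a,b) with Λ w > 0
  obtain ⟨w, hw_mem, hwpos⟩ := lambda_left_pos N hN hb hzb ha hab
  have hw0 : 0 < w := lt_trans ha hw_mem.1
  set Z : Set ℝ := {x | x ∈ Icc a w ∧ LambdaFn N x = 0} with hZ
  have hZne : Z.Nonempty := ⟨a, ⟨le_refl a, hw_mem.1.le⟩, hza⟩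
  have hZbdd : BddAbove Z := ⟨w, fun x hx => hx.1.2⟩
  have hZclosed : IsClosed Z := by
    have : Z = Icc a w ∩ (LambdaFn N)⁻¹' {0} := by
      ext x; simp [hZ, Set.mem_inter_iff, Set.mem_preimage]
    rw [this]
    exact (lambda_continuousOn N hN (fun x hx => lt_of_lt_of_le ha hx.1)).preimage_isClosed_of_isClosed
      isClosed_Icc isClosed_singleton
  set c := sSup Z with hc
  have hcZ : c ∈ Z := hZclosed.csSup_mem hZne hZbdd
  have hc0 : 0 < c := lt_of_lt_of_le ha hcZ.1.1
  have hcw : c < w := lt_of_le_of_ne hcZ.1.2 (fun h => by rw [h] at hcZ; linarith [hcZ.2])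
  obtain ⟨x, hx_mem, hxneg⟩ := lambda_right_neg N hN hc0 hcZ.2 hcw
  have hx0 : 0 < x := lt_trans hc0 hx_mem.1
  -- IVT on [x, w]
  have hcont : ContinuousOn (LambdaFn N) (Icc x w) :=
    lambda_continuousOn N hN (fun y hy => lt_of_lt_of_le hx0 hy.1)
  have hivt := intermediate_value_Ioo (le_of_lt hx_mem.2) hcont
  have h0mem : (0:ℝ) ∈ Ioo (LambdaFn N x) (LambdaFn N w) := ⟨hxneg, hwpos⟩
  obtain ⟨y, hy_mem, hy_eq⟩ := hivt h0mem
  have hyZ : y ∈ Z := ⟨⟨by linarith [hcZ.1.1, hx_mem.1, hy_mem.1], hy_mem.2.le⟩, hy_eq⟩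
  have := le_csSup hZbdd hyZ
  have : x < y := hy_mem.1
  linarith [le_csSup hZbdd hyZ, hx_mem.1, hy_mem.1]

end Main

theorem stmt17 (N : ℕ) (hN : 4 ≤ N) :
    (∃! ρ : ℝ, 0 < ρ ∧ LambdaFn N ρ = 0) ∧
    (∀ ρ : ℝ, 0 < ρ → LambdaFn N ρ = 0 →
      ρ < Real.sqrt ((N : ℝ) - 2) ∧
      deriv (LambdaFn N) ρ = ρ - ((N : ℝ) - 2) / ρ ∧
      deriv (LambdaFn N) ρ < 0 ∧
      2 * π / Real.sqrt ((N : ℝ) - 2) < 2 * π / ρ) := by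
  have hN4 : (4:ℝ) ≤ (N:ℝ) := by exact_mod_cast hN
  -- part 2 first
  have part2 : ∀ ρ : ℝ, 0 < ρ → LambdaFn N ρ = 0 →
      ρ < Real.sqrt ((N : ℝ) - 2) ∧
      deriv (LambdaFn N) ρ = ρ - ((N : ℝ) - 2) / ρ ∧
      deriv (LambdaFn N) ρ < 0 ∧
      2 * π / Real.sqrt ((N : ℝ) - 2) < 2 * π / ρ := by
    intro ρ hρ hz
    have hsq := lambda_zero_sq_lt N hN hρ hz
    have hlt : ρ < Real.sqrt ((N : ℝ) - 2) := by
      rw [show ρ = Real.sqrt (ρ^2) by rw [Real.sqrt_sq hρ.le]]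
      exact Real.sqrt_lt_sqrt (by positivity) hsq
    obtain ⟨d, hd, hdz⟩ := lambda_deriv N hN hρ
    have hderiv : deriv (LambdaFn N) ρ = ρ - ((N : ℝ) - 2) / ρ := by
      rw [hd.deriv, hdz hz]
    refine ⟨hlt, hderiv, ?_, ?_⟩
    · rw [hderiv, sub_neg, lt_div_iff₀ hρ]; nlinarith
    · apply div_lt_div_of_pos_left (by positivity) hρ hlt
  refine ⟨?_, part2⟩
  -- existence
  have ha : (0:ℝ) < 1/2 := by norm_num
  have hb : (1/2 : ℝ) ≤ (N:ℝ)-2 := by linarith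
  have hcont : ContinuousOn (LambdaFn N) (Icc (1/2 : ℝ) ((N:ℝ)-2)) :=
    lambda_continuousOn N hN (fun x hx => lt_of_lt_of_le ha hx.1)
  have hfa : 0 < LambdaFn N (1/2 : ℝ) := lambda_pos_small N hN ha (by norm_num)
  have hfb : LambdaFn N ((N:ℝ)-2) < 0 := lambda_neg_large N hN (le_refl _)
  have hivt := intermediate_value_Ioo' hb hcont
  obtain ⟨ρ₀, hρ₀_mem, hρ₀_eq⟩ := hivt (⟨hfb, hfa⟩ : (0:ℝ) ∈ Ioo (LambdaFn N ((N:ℝ)-2)) (LambdaFn N (1/2:ℝ)))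
  have hρ₀pos : 0 < ρ₀ := lt_trans ha hρ₀_mem.1
  refine ⟨ρ₀, ⟨hρ₀pos, hρ₀_eq⟩, fun y hy => ?_⟩
  rcases lt_trichotomy y ρ₀ with h | h | h
  · exact absurd (lambda_no_two_zeros N hN hy.1 h hy.2 hρ₀_eq) (fun f => f)
  · exact h
  · exact absurd (lambda_no_two_zeros N hN hρ₀pos h hρ₀_eq hy.2) (fun f => f)
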